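/- The only rational numbers f with 0 < f < n such that sin(πf/n) is a strictly positive rational number are f = n/2, f = n/6, and f = 5n/6 (with values 1, 1/2, 1/2 respectively). -/

import Mathlib

open Real

def nseq (p q : ℤ) : ℕ → ℤ
  | 0 => 2
  | 1 => p
  | (k+2) => p * nseq p q (k+1) - q^2 * nseq p q k

lemma nseq_real (p q : ℤ) (x : ℝ) (h : (p : ℝ) = 2 * Real.cos x * q) :
    ∀ k : ℕ, (nseq p q k : ℝ) = 2 * Real.cos (k * x) * q ^ k := by
  intro k
  induction k using Nat.twoStepInduction with
  | zero => simp [nseq]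
  | one => simpa [nseq] using h
  | more k ih2 ih1 =>
    have key : Real.cos ((k+2 : ℕ) * x) + Real.cos (k * x) = 2 * Real.cos ((k+1:ℕ) * x) * Real.cos x := by
      rw [Real.cos_add_cos]
      push_cast
      ring_nf
    have : Real.cos ((k+2 : ℕ) * x) = 2 * Real.cos ((k+1:ℕ) * x) * Real.cos x - Real.cos (k * x) := by
      linarith
    simp only [nseq, Int.cast_sub, Int.cast_mul, Int.cast_pow]
    rw [ih1, ih2, this, h]
    ring

lemma nseq_coprime (p q : ℤ) (hpq : IsCoprime p q) :
    ∀ k : ℕ, 1 ≤ k → IsCoprime (nseq p q k) q := by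
  intro k
  induction k using Nat.twoStepInduction with
  | zero => intro h; omega
  | one => intro _; simpa [nseq] using hpq
  | more k ih2 ih1 =>
    intro _
    have h1 : IsCoprime (nseq p q (k+1)) q := ih1 (by omega)
    show IsCoprime (p * nseq p q (k+1) - q^2 * nseq p q k) q
    have : IsCoprime (p * nseq p q (k+1)) q := hpq.mul_left h1
    have := this.add_mul_left_left (-(q * nseq p q k))
    convert this using 1
    · rfl
    · ring

/-- Niven: if cos (π r) is rational for rational r, then 2 cos (π r) is an integer. -/
lemma niven_core (r : ℚ) (c : ℚ) (h : (c : ℝ) = Real.cos (π * r)) :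
    ∃ m : ℤ, (c : ℝ) = (m : ℝ) / 2 := by
  set t : ℚ := 2 * c with ht
  set p : ℤ := t.num
  set q : ℤ := (t.den : ℤ)
  have hq0 : 0 < q := by positivity
  have hpq : IsCoprime p q := by
    rw [Int.isCoprime_iff_gcd_eq_one]
    exact t.reduced
  set x : ℝ := π * r with hx
  have hDen : (t : ℝ) = (p : ℝ) / (q : ℝ) := by
    conv_lhs => rw [← Rat.num_div_den t]
    push_cast
    norm_cast
  have hp : (p : ℝ) = 2 * Real.cos x * q := by
    have : (t : ℝ) = 2 * Real.cos x := by push_cast [ht]; rw [h]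
    rw [hDen] at this
    field_simp at this
    linarith [this]
  have hreal := nseq_real p q x hp r.den
  -- r.den * x = π * r.num
  have hrq : ((r.den : ℚ)) * r = (r.num : ℚ) := by
    have hd : ((r.den : ℚ)) ≠ 0 := by
      exact_mod_cast r.den_nz
    rw [mul_comm]
    exact ((div_eq_iff hd).mp (Rat.num_div_den r)).symm
  have hbx : (r.den : ℝ) * x = r.num * π := by
    have : ((r.den : ℝ)) * (r : ℝ) = (r.num : ℝ) := by exact_mod_cast hrq
    rw [hx, mul_left_comm, this, mul_comm]
  have habs : |Real.cos ((r.den : ℝ) * x)| = 1 := by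
    rw [hbx]; exact Real.abs_cos_int_mul_pi r.num
  -- so |nseq p q r.den| = 2 * q ^ r.den
  have habs2 : |(nseq p q r.den : ℝ)| = 2 * (q : ℝ) ^ r.den := by
    rw [hreal, abs_mul, abs_mul, habs]
    rw [abs_of_pos (by positivity : (0:ℝ) < (q:ℝ) ^ r.den)]
    norm_num
  have habsZ : |nseq p q r.den| = 2 * q ^ r.den := by
    have := habs2
    push_cast [← Int.cast_abs] at this
    exact_mod_cast this
  -- q divides |nseq p q r.den| since r.den ≥ 1
  have hrden : 1 ≤ r.den := r.den_pos
  have hq1 : q = 1 := by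
    by_contra hne
    have hdvd : q ∣ nseq p q r.den := by
      have hd : q ∣ 2 * q ^ r.den := Dvd.dvd.mul_left (dvd_pow_self q (by omega)) 2
      rcases (abs_eq (by positivity : (0:ℤ) ≤ 2 * q ^ r.den)).mp habsZ with h' | h'
      · rw [h']; exact hd
      · rw [h']; exact hd.neg_right
    have hco := nseq_coprime p q hpq r.den hrden
    have := Int.isUnit_iff.mp (IsCoprime.isUnit_of_dvd' hco hdvd dvd_rfl)
    omega
  refine ⟨p, ?_⟩
  have : (t : ℝ) = (p : ℝ) := by rw [hDen, hq1]; norm_num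
  push_cast [ht] at this
  linarith

open Real in
theorem rational_sin_values (n : ℕ) (hn : 0 < n) (f : ℚ) (hf0 : 0 < f) (hfn : f < n) :
    (∃ q : ℚ, 0 < q ∧ (q : ℝ) = Real.sin (π * (f : ℝ) / n)) ↔
      (f = n / 2 ∨ f = n / 6 ∨ f = 5 * n / 6) := by
  have hn0 : ((n : ℚ)) ≠ 0 := by positivity
  have hnR : ((n : ℝ)) ≠ 0 := by positivity
  constructor
  · rintro ⟨q, hq0, hq⟩
    obtain ⟨r, hr⟩ : ∃ r : ℚ, r = 1/2 - f / n := ⟨_, rfl⟩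
    have hrbound : |r| ≤ 1/2 := by
      rw [abs_le]
      constructor
      · rw [hr]
        have : f / n < 1 := by
          rw [div_lt_one (by positivity)]
          exact hfn
        linarith
      · rw [hr]
        have : 0 < f / n := by positivity
        linarith
    have harg : π * (r : ℝ) = π/2 - π * (f : ℝ) / n := by
      rw [hr]
      push_cast
      ring
    have hcos : (q : ℝ) = Real.cos (π * (r : ℝ)) := by
      rw [harg, Real.cos_pi_div_two_sub, hq]
    obtain ⟨m, hm⟩ := niven_core r q hcos
    -- bounds on m
    have hsin_le : (q : ℝ) ≤ 1 := by rw [hq]; exact Real.sin_le_one _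
    have hqR : (0:ℝ) < q := by exact_mod_cast hq0
    have hm1 : (0:ℝ) < (m:ℝ) := by rw [hm] at hqR; linarith
    have hm2 : (m:ℝ) ≤ 2 := by rw [hm] at hsin_le; linarith
    have hm1' : 0 < m := by exact_mod_cast hm1
    have hm2' : m ≤ 2 := by exact_mod_cast hm2
    have hrabs : |π * (r : ℝ)| ≤ π/2 := by
      rw [abs_mul, abs_of_pos pi_pos]
      have : |(r:ℝ)| ≤ 1/2 := by
        have h2 : ((|r| : ℚ) : ℝ) ≤ (((1:ℚ)/2 : ℚ) : ℝ) := Rat.cast_le.mpr hrbound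
        push_cast at h2
        exact h2
      nlinarith [pi_pos]
    have hmem : |π * (r : ℝ)| ∈ Set.Icc 0 π := ⟨abs_nonneg _, by linarith [pi_pos]⟩
    interval_cases m
    · -- m = 1 : cos (π r) = 1/2, so |π r| = π/3
      have hch : Real.cos |π * (r : ℝ)| = Real.cos (π/3) := by
        rw [Real.cos_abs, Real.cos_pi_div_three, ← hcos, hm]
        norm_num
      have h3 : |π * (r : ℝ)| = π/3 :=
        Real.injOn_cos hmem ⟨by positivity, by linarith [pi_pos]⟩ hch
      rcases abs_eq (by positivity : (0:ℝ) ≤ π/3) |>.mp h3 with h' | h'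
      · -- π r = π/3 : r = 1/3, f = n/6
        have : (r : ℝ) = 1/3 := by
          field_simp at h'
          nlinarith [pi_pos, h']
        have hr3 : r = 1/3 := by
          have h2 : ((r:ℚ):ℝ) = (((1:ℚ)/3 : ℚ):ℝ) := by push_cast; linarith [this]
          exact_mod_cast h2
        right; left
        rw [hr] at hr3
        field_simp at hr3 ⊢
        linarith
      · -- π r = -π/3 : r = -1/3, f = 5n/6
        have : (r : ℝ) = -(1/3) := by
          field_simp at h'
          nlinarith [pi_pos, h']
        have hr3 : r = -(1/3) := by
          have h2 : ((r:ℚ):ℝ) = ((-(1/3) : ℚ):ℝ) := by push_cast; linarith [this]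
          exact_mod_cast h2
        right; right
        rw [hr] at hr3
        field_simp at hr3 ⊢
        linarith
    · -- m = 2 : cos (π r) = 1, so r = 0, f = n/2
      have hch : Real.cos |π * (r : ℝ)| = Real.cos 0 := by
        rw [Real.cos_abs, Real.cos_zero, ← hcos, hm]
        norm_num
      have h3 : |π * (r : ℝ)| = 0 :=
        Real.injOn_cos hmem ⟨le_refl 0, le_of_lt pi_pos⟩ hch
      have : (r : ℝ) = 0 := by
        rw [abs_eq_zero] at h3
        rcases mul_eq_zero.mp h3 with h' | h'
        · exact absurd h' pi_ne_zero
        · exact h'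
      have hr0 : r = 0 := by exact_mod_cast this
      left
      rw [hr] at hr0
      field_simp at hr0 ⊢
      linarith
  · rintro (hf | hf | hf)
    · refine ⟨1, one_pos, ?_⟩
      have : π * (f : ℝ) / n = π/2 := by
        rw [hf]; push_cast; field_simp
      rw [this, Real.sin_pi_div_two]; norm_num
    · refine ⟨1/2, by norm_num, ?_⟩
      have : π * (f : ℝ) / n = π/6 := by
        rw [hf]; push_cast; field_simp
      rw [this, Real.sin_pi_div_six]; norm_num
    · refine ⟨1/2, by norm_num, ?_⟩
      have : π * (f : ℝ) / n = π - π/6 := by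
        rw [hf]; push_cast; field_simp; ring
      rw [this, Real.sin_pi_sub, Real.sin_pi_div_six]; norm_num
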